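/- arXiv:2101.11166 — 2 statements merged into one kernel-verified Lean document; each statement's English description precedes it below -/
import Mathlib

section
/- For any convex function f: Rⁿ → R and random vector w with rate function ρ, and any γ > 0, the bound (1/γ) sup_z (γ f(z) − ρ(z)) ≤ R_γ(f(w)) holds. -/
open MeasureTheory Real

lemma exists_subgrad {n : ℕ} {f : (Fin n → ℝ) → ℝ} (hf : ConvexOn ℝ Set.univ f)
    (z : Fin n → ℝ) :
    ∃ y : Fin n → ℝ, ∀ x, f z + (∑ i, x i * y i) - (∑ i, z i * y i) ≤ f x := by
  set E := (Fin n → ℝ) × ℝ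
  set s : Set E := {p | f p.1 < p.2} with hs
  have hconv : Convex ℝ s := by
    rintro ⟨p, pt⟩ hp ⟨q, qt⟩ hq a b ha hb hab
    simp only [hs, Set.mem_setOf_eq] at hp hq ⊢
    calc f (a • p + b • q) ≤ a * f p + b * f q :=
          hf.2 (Set.mem_univ p) (Set.mem_univ q) ha hb hab
      _ < a * pt + b * qt := by
          rcases ha.lt_or_eq with ha' | ha'
          · rcases hb.lt_or_eq with hb' | hb'
            · exact add_lt_add (by nlinarith) (by nlinarith)
            · have : a = 1 := by linarith
              simp [← hb', this]; nlinarith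
          · have : b = 1 := by rw [← ha'] at hab; linarith
            simp [← ha', this]; nlinarith
  have hcont : Continuous f := hf.locallyLipschitz.continuous
  have hopen : IsOpen s :=
    isOpen_lt (hcont.comp continuous_fst) continuous_snd
  have hnot : (⟨z, f z⟩ : E) ∉ s := by rw [hs]; exact lt_irrefl (f z)
  obtain ⟨L, hL⟩ := geometric_hahn_banach_point_open hconv hopen hnot
  set β : ℝ := L (0, 1) with hβ
  have hdec : ∀ (x : Fin n → ℝ) (t : ℝ), L (x, t) = L (x, 0) + t * β := by
    intro x t
    have h : (x, t) = (x, (0:ℝ)) + t • ((0 : Fin n → ℝ), (1:ℝ)) := by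
      simp [Prod.ext_iff]
    rw [h, map_add, L.map_smul]; simp [hβ]
  have hβpos : 0 < β := by
    have h1 := hL (z, f z + 1) (by simp [hs])
    rw [hdec z (f z), hdec z (f z + 1)] at h1; linarith
  have hβ' : β ≠ 0 := hβpos.ne'
  have key : ∀ x, L (z, 0) + f z * β ≤ L (x, 0) + f x * β := by
    intro x
    have h2 : ∀ ε > 0, L (z, 0) + f z * β < L (x, 0) + f x * β + ε := by
      intro ε hε
      have h1 := hL (x, f x + ε / β) (by simp [hs]; positivity)
      rw [hdec z (f z), hdec x (f x + ε / β)] at h1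
      have h3 : (f x + ε / β) * β = f x * β + ε := by field_simp
      linarith
    linarith [le_of_forall_pos_lt_add h2]
  refine ⟨fun i => -L (Pi.single i 1, 0) / β, fun x => ?_⟩
  have hlin : ∀ v : Fin n → ℝ, ∑ i, v i * (-L (Pi.single i 1, 0) / β)
      = -L (v, 0) / β := by
    intro v
    have hv : ((v, (0:ℝ)) : E) = ∑ i, v i • ((Pi.single i 1 : Fin n → ℝ), (0:ℝ)) := by
      refine Prod.ext ?_ (by simp [Prod.snd_sum])
      simp only [Prod.fst_sum, Prod.smul_fst]
      ext j
      simp [Pi.single_apply, Finset.sum_apply, mul_comm]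
    have h2 : L (v, 0) = ∑ i, v i * L (Pi.single i 1, 0) := by
      conv_lhs => rw [hv]
      rw [map_sum]
      exact Finset.sum_congr rfl fun i _ => by rw [L.map_smul]; simp
    have h3 : ∑ i, v i * (-L (Pi.single i 1, 0) / β)
        = (∑ i, -(v i * L (Pi.single i 1, 0))) / β := by
      rw [Finset.sum_div]; exact Finset.sum_congr rfl fun i _ => by ring
    rw [h3, Finset.sum_neg_distrib, ← h2]
  rw [hlin x, hlin z, ← sub_nonneg]
  have h4 : f x - (f z + -L (x, 0) / β - -L (z, 0) / β)
      = ((L (x,0) + f x * β) - (L (z,0) + f z * β))/β := by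
    field_simp; ring
  rw [h4]
  exact div_nonneg (by linarith [key x]) hβpos.le

/-- For convex f and γ > 0, (1/γ) sup_z (γ f(z) − ρ(z)) ≤ R_γ(f(w)). -/
theorem risk_bound_convex {Ω : Type*} [MeasurableSpace Ω]
    (μ : Measure Ω) [IsProbabilityMeasure μ] {n : ℕ}
    (w : Ω → Fin n → ℝ)
    (c : (Fin n → ℝ) → ℝ) (ρ : (Fin n → ℝ) → ℝ)
    (f : (Fin n → ℝ) → ℝ) (γ : ℝ) (hγ : 0 < γ)
    (hf : ConvexOn ℝ Set.univ f)
    (hint : ∀ y : Fin n → ℝ,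
      Integrable (fun ω => Real.exp (∑ i, w ω i * y i)) μ)
    (hc : ∀ y, c y = Real.log (∫ ω, Real.exp (∑ i, w ω i * y i) ∂μ))
    (hρ : ∀ x, IsLUB {r : ℝ | ∃ y : Fin n → ℝ, r = ∑ i, x i * y i - c y} (ρ x))
    (hfint : Integrable (fun ω => Real.exp (γ * f (w ω))) μ) :
    (1 / γ) * (⨆ z : Fin n → ℝ, (γ * f z - ρ z))
      ≤ (1 / γ) * Real.log (∫ ω, Real.exp (γ * f (w ω)) ∂μ) := by
  have hg : ConvexOn ℝ Set.univ (fun x => γ * f x) := by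
    simpa [smul_eq_mul] using hf.smul hγ.le
  refine mul_le_mul_of_nonneg_left ?_ (by positivity)
  refine ciSup_le fun z => ?_
  obtain ⟨y, hy⟩ := exists_subgrad hg z
  set a : ℝ := γ * f z - ∑ i, z i * y i with ha
  -- pointwise bound
  have hpt : ∀ ω, Real.exp a * Real.exp (∑ i, w ω i * y i)
      ≤ Real.exp (γ * f (w ω)) := by
    intro ω
    rw [← Real.exp_add]
    exact Real.exp_le_exp.2 (by have := hy (w ω); simp only [ha]; linarith)
  have hIpos : 0 < ∫ ω, Real.exp (∑ i, w ω i * y i) ∂μ :=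
    integral_exp_pos (hint y)
  have hmono : Real.exp a * ∫ ω, Real.exp (∑ i, w ω i * y i) ∂μ
      ≤ ∫ ω, Real.exp (γ * f (w ω)) ∂μ := by
    rw [← integral_const_mul]
    exact integral_mono ((hint y).const_mul _) hfint hpt
  have hlog : a + c y ≤ Real.log (∫ ω, Real.exp (γ * f (w ω)) ∂μ) := by
    have h1 : Real.log (Real.exp a * ∫ ω, Real.exp (∑ i, w ω i * y i) ∂μ)
        ≤ Real.log (∫ ω, Real.exp (γ * f (w ω)) ∂μ) :=
      Real.log_le_log (by positivity) hmono
    rwa [Real.log_mul (Real.exp_pos a).ne' hIpos.ne', Real.log_exp, ← hc y] at h1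
  have hρz : (∑ i, z i * y i) - c y ≤ ρ z := (hρ z).1 ⟨y, rfl⟩
  simp only [ha] at hlog
  linarith
end

section
/- For any fixed vector w₀ and γ > 0, the quantity J_pr(w₀) − (1/γ) ρ(w₀) is a lower bound on R_γ(J_pr(w)), where J_pr is any convex function of the noise w (such as the optimal value of the prescient planning problem). -/
open MeasureTheory Real Set

lemma exists_subgradient {n : ℕ} (f : (Fin n → ℝ) → ℝ)
    (hf : ConvexOn ℝ Set.univ f) (x₀ : Fin n → ℝ) :
    ∃ g : (Fin n → ℝ) →L[ℝ] ℝ, ∀ x, f x₀ + g x - g x₀ ≤ f x := by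
  have hcont : Continuous f :=
    continuousOn_univ.mp (hf.continuousOn isOpen_univ)
  set S : Set ((Fin n → ℝ) × ℝ) := {p | f p.1 < p.2} with hS
  have hSopen : IsOpen S := isOpen_lt (hcont.comp continuous_fst) continuous_snd
  have hSconv : Convex ℝ S := by
    rintro ⟨x, s⟩ hx ⟨y, t⟩ hy a b ha hb hab
    simp only [hS, mem_setOf_eq] at hx hy ⊢
    calc f (a • x + b • y) ≤ a * f x + b * f y :=
          hf.2 (mem_univ x) (mem_univ y) ha hb hab
      _ < a * s + b * t := by
          rcases ha.eq_or_lt with rfl | ha'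
          · simpa using mul_lt_mul_of_pos_left hy (by linarith : (0:ℝ) < b)
          rcases hb.eq_or_lt with rfl | hb'
          · simpa using mul_lt_mul_of_pos_left hx ha'
          exact add_lt_add (mul_lt_mul_of_pos_left hx ha')
            (mul_lt_mul_of_pos_left hy hb')
  have hx₀S : ((x₀, f x₀) : (Fin n → ℝ) × ℝ) ∉ S := by simp [hS]
  obtain ⟨F, hF⟩ := geometric_hahn_banach_open_point hSconv hSopen hx₀S
  set β : ℝ := F (0, 1) with hβ
  have hFsplit : ∀ x : Fin n → ℝ, ∀ t : ℝ, F (x, t) = F (x, 0) + t * β := by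
    intro x t
    have : ((x, t) : (Fin n → ℝ) × ℝ) = (x, 0) + t • (0, 1) := by
      simp [Prod.ext_iff]
    rw [this, map_add, _root_.map_smul, smul_eq_mul]
  have key : ∀ x t, f x < t → F (x, 0) + t * β < F (x₀, 0) + f x₀ * β := by
    intro x t ht
    have h0 := hF (x, t) ht
    have h1 := hFsplit x t
    have h2 := hFsplit x₀ (f x₀)
    linarith
  have hβneg : β < 0 := by
    have := key x₀ (f x₀ + 1) (by linarith)
    nlinarith
  have key2 : ∀ x, F (x, 0) + f x * β ≤ F (x₀, 0) + f x₀ * β := by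
    intro x
    by_contra h
    push_neg at h
    set δ : ℝ := F (x, 0) + f x * β - (F (x₀, 0) + f x₀ * β) with hδ
    have hδpos : 0 < δ := by linarith
    set ε : ℝ := δ / (2 * (-β)) with hε
    have hεpos : 0 < ε := div_pos hδpos (by linarith)
    have h2β : (2:ℝ) * -β ≠ 0 := ne_of_gt (by linarith)
    have h := div_mul_cancel₀ δ h2β
    rw [← hε] at h
    have hεβ : ε * β = -δ / 2 := by linear_combination (-(1:ℝ)/2) * h
    have := key x (f x + ε) (by linarith)
    nlinarith
  refine ⟨(-β)⁻¹ • (F.comp (ContinuousLinearMap.inl ℝ (Fin n → ℝ) ℝ)), fun x => ?_⟩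
  have hx := key2 x
  have hβ' : (0:ℝ) < -β := by linarith
  have ha : (0:ℝ) < (-β)⁻¹ := inv_pos.mpr hβ'
  have haβ : (-β)⁻¹ * β = -1 := by rw [inv_mul_eq_div, div_neg, div_self hβneg.ne]
  simp only [ContinuousLinearMap.smul_apply, ContinuousLinearMap.comp_apply,
    ContinuousLinearMap.inl_apply, smul_eq_mul]
  have hmul := mul_le_mul_of_nonneg_left hx ha.le
  have e1 : (-β)⁻¹ * (F (x, 0) + f x * β)
      = (-β)⁻¹ * F (x, 0) + ((-β)⁻¹ * β) * f x := by ring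
  have e2 : (-β)⁻¹ * (F (x₀, 0) + f x₀ * β)
      = (-β)⁻¹ * F (x₀, 0) + ((-β)⁻¹ * β) * f x₀ := by ring
  rw [haβ] at e1 e2
  linarith [hmul, e1, e2]


/-- For any fixed w₀ and γ > 0, J_pr(w₀) − (1/γ) ρ(w₀) is a lower bound
on R_γ(J_pr(w)) for convex J_pr. -/
theorem prescient_pointwise_bound {Ω : Type*} [MeasurableSpace Ω]
    (μ : Measure Ω) [IsProbabilityMeasure μ] {n : ℕ}
    (w : Ω → Fin n → ℝ)
    (c : (Fin n → ℝ) → ℝ) (ρ : (Fin n → ℝ) → ℝ)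
    (Jpr : (Fin n → ℝ) → ℝ) (γ : ℝ) (hγ : 0 < γ)
    (hJ : ConvexOn ℝ Set.univ Jpr)
    (hint : ∀ y : Fin n → ℝ,
      Integrable (fun ω => Real.exp (∑ i, w ω i * y i)) μ)
    (hc : ∀ y, c y = Real.log (∫ ω, Real.exp (∑ i, w ω i * y i) ∂μ))
    (hρ : ∀ x, IsLUB {r : ℝ | ∃ y : Fin n → ℝ, r = ∑ i, x i * y i - c y} (ρ x))
    (hJint : Integrable (fun ω => Real.exp (γ * Jpr (w ω))) μ)
    (w₀ : Fin n → ℝ) :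
    Jpr w₀ - (1 / γ) * ρ w₀
      ≤ (1 / γ) * Real.log (∫ ω, Real.exp (γ * Jpr (w ω)) ∂μ) := by
  obtain ⟨g, hg⟩ := exists_subgradient Jpr hJ w₀
  set y : Fin n → ℝ := fun i => γ * g (Pi.single i 1) with hy
  have hgx : ∀ x : Fin n → ℝ, γ * g x = ∑ i, x i * y i := by
    intro x
    have hx : x = ∑ i, x i • (Pi.single i (1:ℝ) : Fin n → ℝ) := by
      funext j
      simp [Finset.sum_apply, Pi.single_apply]
    calc γ * g x = γ * g (∑ i, x i • (Pi.single i (1:ℝ) : Fin n → ℝ)) := by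
          rw [← hx]
      _ = ∑ i, x i * y i := by
          rw [map_sum]
          rw [Finset.mul_sum]
          congr 1; funext i
          simp [hy, _root_.map_smul]
          ring
  -- pointwise bound
  have hpt : ∀ ω, Real.exp (γ * Jpr w₀ - ∑ i, w₀ i * y i)
      * Real.exp (∑ i, w ω i * y i) ≤ Real.exp (γ * Jpr (w ω)) := by
    intro ω
    rw [← Real.exp_add]
    apply Real.exp_le_exp.mpr
    have := hg (w ω)
    have h1 := hgx (w ω)
    have h2 := hgx w₀
    nlinarith [hg (w ω)]
  -- integrate
  set I : ℝ := ∫ ω, Real.exp (∑ i, w ω i * y i) ∂μ with hI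
  set K : ℝ := Real.exp (γ * Jpr w₀ - ∑ i, w₀ i * y i) with hK
  have hIpos : 0 < I := integral_exp_pos (hint y)
  have hJpos : 0 < ∫ ω, Real.exp (γ * Jpr (w ω)) ∂μ := integral_exp_pos hJint
  have hKI : K * I ≤ ∫ ω, Real.exp (γ * Jpr (w ω)) ∂μ := by
    rw [hI, ← integral_const_mul]
    exact integral_mono ((hint y).const_mul K) hJint hpt
  have hcy : c y = Real.log I := hc y
  have hlog : γ * Jpr w₀ - ∑ i, w₀ i * y i + c y
      ≤ Real.log (∫ ω, Real.exp (γ * Jpr (w ω)) ∂μ) := by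
    rw [Real.le_log_iff_exp_le hJpos]
    calc Real.exp (γ * Jpr w₀ - ∑ i, w₀ i * y i + c y)
        = K * Real.exp (c y) := by rw [Real.exp_add]
      _ = K * I := by rw [hcy, Real.exp_log hIpos]
      _ ≤ _ := hKI
  -- use ρ upper bound
  have hρb : ∑ i, w₀ i * y i - c y ≤ ρ w₀ := (hρ w₀).1 ⟨y, rfl⟩
  have hγ' : (0:ℝ) < 1 / γ := by positivity
  have h1 := mul_le_mul_of_nonneg_left hlog hγ'.le
  have h2 := mul_le_mul_of_nonneg_left hρb hγ'.le
  have e1 : (1/γ) * (γ * Jpr w₀ - ∑ i, w₀ i * y i + c y)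
      = Jpr w₀ - (1/γ) * (∑ i, w₀ i * y i) + (1/γ) * c y := by
    field_simp
  have e2 : (1/γ) * (∑ i, w₀ i * y i - c y)
      = (1/γ) * (∑ i, w₀ i * y i) - (1/γ) * c y := by ring
  linarith [h1, h2, e1, e2]
end
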